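/- Let K be a field, and let q, a ∈ K with q nonzero and q^m ≠ 1 for all integers m ≥ 1. Then the following identity holds in the formal power series ring K⟦X⟧: ∑_{k=0}^{∞} q^k X^k · (∏_{j=0}^{k−1}(1 − X q^{−j})) · (∏_{j=0}^{k−1}(1 − a q^{j−1})) / (q;q)_k = ∑_{d₁,d₂,d₃,d₄ ≥ 0} (−1)^{d₂+d₄} a^{d₂} q^{d₁ + d₃ + d₂(d₂−1)/2 + d₄(d₄+1)/2 − d₁d₄ − d₂d₄} X^{d₁+d₂+d₃+d₄} / ((q;q)_{d₁}(q;q)_{d₂}(q;q)_{d₃}(q;q)_{d₄}). (Both sides are formally summable in K⟦X⟧: the k-th term on the left has X-order ≥ k and the term indexed by d on the right has X-order d₁+d₂+d₃+d₄.) -/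

import Mathlib

/-- The q-Pochhammer symbol `(q;q)_n = ∏_{k=1}^{n} (1 − qᵏ)`. -/
def pochQ {K : Type*} [Field K] (q : K) (n : ℕ) : K :=
  ∏ k ∈ Finset.range n, (1 - q ^ (k + 1))

namespace TrefoilAux

variable {K : Type*} [Field K]

lemma pochQ_succ (q : K) (n : ℕ) : pochQ q (n+1) = pochQ q n * (1 - q ^ (n+1)) := by
  simp [pochQ, Finset.prod_range_succ]

lemma pochQ_ne_zero {q : K} (hq : ∀ m : ℕ, 1 ≤ m → q ^ m ≠ 1) (n : ℕ) :
    pochQ q n ≠ 0 := by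
  refine Finset.prod_ne_zero_iff.2 fun k _ => ?_
  have := hq (k+1) (Nat.succ_le_succ (Nat.zero_le k))
  intro h
  apply this
  have : q ^ (k+1) = 1 := by linear_combination -h
  exact this

/-- coefficients of `∏_{j<k} (1 - p^j z)`, defined by the Pascal recursion. -/
def qc (p : K) : ℕ → ℕ → K
  | 0, 0 => 1
  | 0, _+1 => 0
  | k+1, 0 => qc p k 0
  | k+1, j+1 => qc p k (j+1) - p ^ k * qc p k j

lemma qc_zero_of_gt (p : K) : ∀ k j : ℕ, k < j → qc p k j = 0
  | 0, _+1, _ => rfl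
  | k+1, j+1, h => by
      have h1 : k < j + 1 := by omega
      have h2 : k < j := by omega
      simp [qc, qc_zero_of_gt p k (j+1) h1, qc_zero_of_gt p k j h2]

lemma prod_eq_sum_qc {R : Type*} [CommRing R] (φ : K →+* R) (p : K) (z : R) (k : ℕ) :
    ∏ j ∈ Finset.range k, (1 - φ (p ^ j) * z)
      = ∑ i ∈ Finset.range (k+1), φ (qc p k i) * z ^ i := by
  induction k with
  | zero => simp [qc]
  | succ k ih =>
      have hlast : qc p k (k+1) = 0 := qc_zero_of_gt p k (k+1) (by omega)
      rw [Finset.prod_range_succ, ih]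
      rw [Finset.sum_range_succ' (fun i => φ (qc p (k+1) i) * z ^ i) (k+1)]
      have step : ∀ i : ℕ, φ (qc p (k+1) (i+1)) * z ^ (i+1)
          = φ (qc p k (i+1)) * z ^ (i+1) - φ (p ^ k) * z * (φ (qc p k i) * z ^ i) := by
        intro i
        show φ (qc p k (i+1) - p ^ k * qc p k i) * z ^ (i+1) = _
        rw [map_sub, map_mul]
        ring
      have h0 : φ (qc p (k+1) 0) * z ^ 0 = φ (qc p k 0) * z ^ 0 := rfl
      simp only [step, h0, Finset.sum_sub_distrib, ← Finset.mul_sum]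
      have hshift : (∑ i ∈ Finset.range (k+1), φ (qc p k (i+1)) * z ^ (i+1))
          = (∑ i ∈ Finset.range (k+1), φ (qc p k i) * z ^ i) - φ (qc p k 0) * z ^ 0 := by
        have := Finset.sum_range_succ' (fun i => φ (qc p k i) * z ^ i) (k+1)
        rw [Finset.sum_range_succ (fun i => φ (qc p k i) * z ^ i) (k+1)] at this
        rw [hlast] at this
        simp only [map_zero, zero_mul, add_zero] at this
        rw [this]
        ring
      rw [hshift]
      ring

lemma qc_zero_eq_one (p : K) : ∀ k, qc p k 0 = 1
  | 0 => rfl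
  | k+1 => by rw [show qc p (k+1) 0 = qc p k 0 from rfl, qc_zero_eq_one p k]

lemma qc_closed (p : K) (hp : ∀ n, pochQ p n ≠ 0) :
    ∀ k i : ℕ, i ≤ k →
      qc p k i = (-1 : K) ^ i * p ^ (i * (i-1) / 2) *
        (pochQ p k / (pochQ p i * pochQ p (k - i))) := by
  intro k
  induction k with
  | zero =>
      intro i hi
      interval_cases i
      simp [qc, pochQ]
  | succ k ih =>
      intro i hi
      match i with
      | 0 =>
          simp only [qc_zero_eq_one, pow_zero, Nat.zero_mul, Nat.sub_zero, one_mul,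
            Nat.zero_div]
          rw [show pochQ p 0 = 1 from rfl, one_mul, div_self (hp (k+1))]
      | (j+1) =>
          rw [show qc p (k+1) (j+1) = qc p k (j+1) - p ^ k * qc p k j from rfl]
          rcases Nat.lt_or_ge j k with hj | hj
          · -- j + 1 ≤ k
            have hj1 : j + 1 ≤ k := hj
            rw [ih (j+1) hj1, ih j (by omega)]
            obtain ⟨m, hm⟩ : ∃ m, k = m + j + 1 := ⟨k - (j+1), by omega⟩
            subst hm
            have e1 : m + j + 1 + 1 - (j+1) = m + 1 := by omega
            have e2 : m + j + 1 - (j + 1) = m := by omega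
            have e3 : m + j + 1 - j = m + 1 := by omega
            have e4 : (j+1) * j / 2 = j * (j-1)/2 + j := by
              have hlin : j * (j-1) + 2*j = (j+1) * j := by
                rcases j with _ | s
                · rfl
                · simp only [Nat.succ_sub_one]; ring
              have hev : ∃ t, j * (j - 1) = 2 * t := by
                rcases j with _ | s
                · exact ⟨0, rfl⟩
                · obtain ⟨t, ht⟩ := Nat.even_mul_succ_self s
                  exact ⟨t, by simp only [Nat.succ_sub_one]; rw [mul_comm]; omega⟩
              obtain ⟨t, ht⟩ := hev
              omega
            rw [Nat.add_sub_cancel, e1, e2, e3, e4]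
            rw [show pochQ p (m+j+1+1) = pochQ p (m+j+1) * (1 - p ^ (m+j+1+1)) from pochQ_succ p _,
              show pochQ p (m+1) = pochQ p m * (1 - p ^ (m+1)) from pochQ_succ p _,
              show pochQ p (j+1) = pochQ p j * (1 - p ^ (j+1)) from pochQ_succ p _]
            have h1 := hp (m+j+1); have h2 := hp m; have h3 := hp j
            have h4 : (1 : K) - p ^ (m+1) ≠ 0 := by
              have := pochQ_succ p m ▸ hp (m+1)
              intro h; rw [h, mul_zero] at this; exact this rfl
            have h5 : (1 : K) - p ^ (j+1) ≠ 0 := by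
              have := pochQ_succ p j ▸ hp (j+1)
              intro h; rw [h, mul_zero] at this; exact this rfl
            field_simp
            ring
          · -- j = k
            have hjk : j = k := by omega
            subst hjk
            rw [qc_zero_of_gt p j (j+1) (by omega), ih j le_rfl]
            have e1 : j + 1 - (j + 1) = 0 := by omega
            have e2 : j - j = 0 := by omega
            have e4 : (j+1) * j / 2 = j * (j-1)/2 + j := by
              have hlin : j * (j-1) + 2*j = (j+1) * j := by
                rcases j with _ | s
                · rfl
                · simp only [Nat.succ_sub_one]; ring
              have hev : ∃ t, j * (j - 1) = 2 * t := by
                rcases j with _ | s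
                · exact ⟨0, rfl⟩
                · obtain ⟨t, ht⟩ := Nat.even_mul_succ_self s
                  exact ⟨t, by simp only [Nat.succ_sub_one]; rw [mul_comm]; omega⟩
              obtain ⟨t, ht⟩ := hev
              omega
            rw [Nat.add_sub_cancel, e1, e2, e4, show pochQ p 0 = 1 from rfl, mul_one, mul_one,
              div_self (hp j), div_self (hp (j+1)), pow_add]
            ring

lemma tri (j : ℕ) : (j+1) * j / 2 = j * (j-1) / 2 + j := by
  have hlin : j * (j-1) + 2*j = (j+1) * j := by
    rcases j with _ | s
    · rfl
    · simp only [Nat.succ_sub_one]; ring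
  have hev : ∃ t, j * (j - 1) = 2 * t := by
    rcases j with _ | s
    · exact ⟨0, rfl⟩
    · obtain ⟨t, ht⟩ := Nat.even_mul_succ_self s
      exact ⟨t, by simp only [Nat.succ_sub_one]; rw [mul_comm]; omega⟩
  obtain ⟨t, ht⟩ := hev
  omega

lemma sum_range_add_one (m : ℕ) : ∑ k ∈ Finset.range m, (k+1) = (m+1) * m / 2 := by
  induction m with
  | zero => rfl
  | succ m ih =>
      rw [Finset.sum_range_succ, ih]
      have h := tri (m+1)
      simp only [Nat.add_sub_cancel] at h
      omega

lemma pochQ_inv (q : K) (hq0 : q ≠ 0) (m : ℕ) :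
    pochQ q⁻¹ m = (-1 : K)^m * q⁻¹ ^ ((m+1) * m / 2) * pochQ q m := by
  have hfac : ∀ k : ℕ, (1 : K) - q⁻¹ ^ (k+1) = (-1) * q⁻¹^(k+1) * (1 - q^(k+1)) := by
    intro k
    have hAB : q⁻¹^(k+1) * q^(k+1) = 1 := by
      rw [← mul_pow, inv_mul_cancel₀ hq0, one_pow]
    linear_combination -hAB
  unfold pochQ
  rw [Finset.prod_congr rfl (fun k _ => hfac k)]
  rw [Finset.prod_mul_distrib, Finset.prod_mul_distrib, Finset.prod_const,
    Finset.prod_pow_eq_pow_sum, Finset.card_range, sum_range_add_one]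

lemma pochQ_inv_ne_zero {q : K} (hq0 : q ≠ 0) (hq : ∀ m : ℕ, 1 ≤ m → q ^ m ≠ 1) (n : ℕ) :
    pochQ q⁻¹ n ≠ 0 := by
  refine pochQ_ne_zero (fun m hm h => hq m hm ?_) n
  rw [inv_pow, inv_eq_one] at h
  exact h

lemma prod_split (q : K) (hq0 : q ≠ 0) (hq : ∀ m : ℕ, 1 ≤ m → q ^ m ≠ 1) (k e : ℕ)
    (he : e ≤ k) :
    ∏ j ∈ Finset.range e, (1 - q ^ ((j:ℤ) - k)) = pochQ q⁻¹ k / pochQ q⁻¹ (k - e) := by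
  have hsplit : pochQ q⁻¹ k
      = pochQ q⁻¹ (k-e) * ∏ j ∈ Finset.range e, (1 - q⁻¹ ^ ((k-e) + j + 1)) := by
    conv_lhs => rw [pochQ]
    rw [show Finset.range k = Finset.range ((k-e)+e) by rw [Nat.sub_add_cancel he],
      Finset.prod_range_add, ← pochQ]
  have hrefl : ∏ j ∈ Finset.range e, (1 - q⁻¹ ^ ((k-e) + j + 1))
      = ∏ j ∈ Finset.range e, (1 - q ^ ((j:ℤ) - k)) := by
    rw [← Finset.prod_range_reflect (fun j => (1 : K) - q ^ ((j:ℤ) - k)) e]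
    apply Finset.prod_congr rfl
    intro j hj
    have hj' : j < e := Finset.mem_range.1 hj
    congr 1
    rw [← zpow_natCast q⁻¹ ((k-e) + j + 1), inv_zpow, ← zpow_neg]
    congr 1
    push_cast [Nat.cast_sub he]
    omega
  rw [hsplit, hrefl, mul_comm, mul_div_assoc,
    div_self (pochQ_inv_ne_zero hq0 hq (k-e)), mul_one]

lemma qc_inv_eq (q : K) (hq0 : q ≠ 0) (hq : ∀ m : ℕ, 1 ≤ m → q ^ m ≠ 1) (k e : ℕ) :
    qc q⁻¹ k e = q ^ e * (∏ j ∈ Finset.range e, (1 - q ^ ((j:ℤ) - k))) / pochQ q e := by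
  have hp := pochQ_ne_zero hq
  have hp' := pochQ_inv_ne_zero hq0 hq
  rcases le_or_gt e k with he | he
  · have key : ∀ (A B C s u v w : K), s ≠ 0 → u ≠ 0 → B ≠ 0 → C ≠ 0 → v * w = 1 →
        s * u * (A / (s * (u * v) * C * B)) = w * (A / B) / C := by
      intro A B C s u v w hs hu hB hC hvw
      have hw : w ≠ 0 := right_ne_zero_of_mul (hvw ▸ one_ne_zero)
      have hv : v = w⁻¹ := eq_inv_of_mul_eq_one_left hvw
      rw [hv]
      field_simp
    rw [qc_closed q⁻¹ hp' k e he, prod_split q hq0 hq k e he,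
      pochQ_inv q hq0 e, tri e, pow_add]
    exact key (pochQ q⁻¹ k) (pochQ q⁻¹ (k-e)) (pochQ q e) ((-1:K)^e)
      (q⁻¹ ^ (e*(e-1)/2)) (q⁻¹ ^ e) (q ^ e)
      (pow_ne_zero _ (by norm_num)) (pow_ne_zero _ (inv_ne_zero hq0))
      (hp' (k-e)) (hp e)
      (by rw [← mul_pow, inv_mul_cancel₀ hq0, one_pow])
  · rw [qc_zero_of_gt q⁻¹ k e he]
    have : ∏ j ∈ Finset.range e, (1 - q ^ ((j:ℤ) - k)) = 0 := by
      apply Finset.prod_eq_zero (Finset.mem_range.2 he)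
      rw [sub_self (k:ℤ), zpow_zero, sub_self]
    rw [this, mul_zero, zero_div]

section Reindex

variable {M : Type*} [AddCommMonoid M]

lemma sum_guard_range (n m : ℕ) (h : m ≤ n) (g : ℕ → M) :
    ∑ i ∈ Finset.range (n+1), (if i ≤ m then g i else 0)
      = ∑ i ∈ Finset.range (m+1), g i := by
  rw [← Finset.sum_subset (Finset.range_subset_range.2 (by omega)
      : Finset.range (m+1) ⊆ Finset.range (n+1))]
  · apply Finset.sum_congr rfl
    intro i hi
    rw [if_pos (by rw [Finset.mem_range] at hi; omega)]
  · intro i hi hni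
    exact if_neg (by rw [Finset.mem_range] at hni; omega)

lemma sum_shift (n m : ℕ) (hm : m ≤ n) (g : ℕ → M) (hg : ∀ j, n < j → g j = 0) :
    ∑ i ∈ Finset.range (n+1), g (m + i)
      = ∑ k ∈ Finset.range (n+1), (if m ≤ k then g k else 0) := by
  have h1 : ∑ i ∈ Finset.range (n+1), g (m + i) = ∑ i ∈ Finset.Ico m (m+n+1), g i := by
    rw [Finset.sum_Ico_eq_sum_range]
    have hmn : m + n + 1 - m = n + 1 := by omega
    rw [hmn]
  have h2 : ∑ i ∈ Finset.Ico m (m+n+1), g i = ∑ i ∈ Finset.Ico m (n+1), g i := by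
    rw [← Finset.sum_Ico_consecutive g (by omega : m ≤ n+1) (by omega : n+1 ≤ m+n+1)]
    have : ∑ i ∈ Finset.Ico (n+1) (m+n+1), g i = 0 := by
      apply Finset.sum_eq_zero
      intro i hi
      exact hg i (by rw [Finset.mem_Ico] at hi; omega)
    rw [this, add_zero]
  have hsub : Finset.Ico m (n+1) ⊆ Finset.range (n+1) := by
    intro x hx
    rw [Finset.mem_Ico] at hx
    exact Finset.mem_range.2 (by omega)
  have h3 : ∑ k ∈ Finset.range (n+1), (if m ≤ k then g k else 0)
      = ∑ i ∈ Finset.Ico m (n+1), (if m ≤ i then g i else 0) :=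
    (Finset.sum_subset hsub (fun i hi hni =>
      if_neg (by rw [Finset.mem_Ico] at hni; rw [Finset.mem_range] at hi; omega))).symm
  have h4 : ∑ i ∈ Finset.Ico m (n+1), (if m ≤ i then g i else 0)
      = ∑ i ∈ Finset.Ico m (n+1), g i := by
    apply Finset.sum_congr rfl
    intro i hi
    rw [if_pos (by rw [Finset.mem_Ico] at hi; omega)]
  rw [h1, h2, h3, h4]

lemma reindex (n : ℕ) (f : ℕ → ℕ → ℕ → ℕ → M) :
    (∑ d1 ∈ Finset.range (n+1), ∑ d2 ∈ Finset.range (n+1), ∑ d3 ∈ Finset.range (n+1),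
        ∑ d4 ∈ Finset.range (n+1),
          if d1+d2+d3+d4 = n then f d1 d2 d3 d4 else 0)
      = ∑ k ∈ Finset.range (n+1), ∑ d2 ∈ Finset.range (k+1),
          ∑ d4 ∈ Finset.range (n-k+1), f (k-d2) d2 (n-k-d4) d4 := by
  have hinner : ∀ d1 d2 : ℕ,
      (∑ d3 ∈ Finset.range (n+1), ∑ d4 ∈ Finset.range (n+1),
          if d1+d2+d3+d4 = n then f d1 d2 d3 d4 else 0)
        = ∑ d4 ∈ Finset.range (n+1),
            (if d1+d2+d4 ≤ n then f d1 d2 (n-d1-d2-d4) d4 else 0) := by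
    intro d1 d2
    rw [Finset.sum_comm]
    apply Finset.sum_congr rfl
    intro d4 _
    rcases le_or_gt (d1+d2+d4) n with h | h
    · rw [if_pos h, Finset.sum_eq_single (n-d1-d2-d4)]
      · rw [if_pos (by omega)]
      · intro d3 h3 hne
        rw [if_neg (fun hc => hne (by omega))]
      · intro habs
        exact absurd (Finset.mem_range.2 (by omega)) habs
    · rw [if_neg (by omega)]
      apply Finset.sum_eq_zero
      intro d3 _
      rw [if_neg (by omega)]
  -- G d2 k
  set G : ℕ → ℕ → M := fun d2 k => ∑ d4 ∈ Finset.range (n+1),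
      (if k + d4 ≤ n then f (k-d2) d2 (n-k-d4) d4 else 0) with hG
  have hstep1 : (∑ d1 ∈ Finset.range (n+1), ∑ d2 ∈ Finset.range (n+1),
      ∑ d3 ∈ Finset.range (n+1), ∑ d4 ∈ Finset.range (n+1),
        if d1+d2+d3+d4 = n then f d1 d2 d3 d4 else 0)
      = ∑ d2 ∈ Finset.range (n+1), ∑ d1 ∈ Finset.range (n+1), G d2 (d2 + d1) := by
    rw [Finset.sum_comm]
    apply Finset.sum_congr rfl
    intro d2 _
    apply Finset.sum_congr rfl
    intro d1 _
    rw [hinner d1 d2, hG]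
    apply Finset.sum_congr rfl
    intro d4 _
    have e1 : d2 + d1 - d2 = d1 := by omega
    have e2 : n - (d2 + d1) - d4 = n - d1 - d2 - d4 := by omega
    have e3 : (d1 + d2 + d4 ≤ n) = (d2 + d1 + d4 ≤ n) := by
      simp only [eq_iff_iff]
      omega
    rw [e1, e2]
    exact if_congr (by omega) rfl rfl
  rw [hstep1]
  have hstep2 : ∀ d2 ∈ Finset.range (n+1),
      (∑ d1 ∈ Finset.range (n+1), G d2 (d2 + d1))
        = ∑ k ∈ Finset.range (n+1), (if d2 ≤ k then G d2 k else 0) := by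
    intro d2 hd2
    apply sum_shift n d2 (by rw [Finset.mem_range] at hd2; omega)
    intro j hj
    apply Finset.sum_eq_zero
    intro d4 _
    rw [if_neg (by omega)]
  rw [Finset.sum_congr rfl hstep2, Finset.sum_comm]
  apply Finset.sum_congr rfl
  intro k hk
  have hkn : k ≤ n := by rw [Finset.mem_range] at hk; omega
  rw [sum_guard_range n k hkn]
  apply Finset.sum_congr rfl
  intro d2 _
  rw [hG]
  have hcond : ∀ d4 : ℕ, (k + d4 ≤ n) = (d4 ≤ n - k) := by
    intro d4
    simp only [eq_iff_iff]
    omega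
  calc (∑ d4 ∈ Finset.range (n+1), if k + d4 ≤ n then f (k-d2) d2 (n-k-d4) d4 else 0)
      = ∑ d4 ∈ Finset.range (n+1), if d4 ≤ n - k then f (k-d2) d2 (n-k-d4) d4 else 0 := by
        apply Finset.sum_congr rfl
        intro d4 _
        exact if_congr (by omega) rfl rfl
    _ = _ := sum_guard_range n (n-k) (by omega) _

end Reindex

lemma perk (q a : K) (hq0 : q ≠ 0) (hq : ∀ m : ℕ, 1 ≤ m → q ^ m ≠ 1) (k e : ℕ) :
    (q ^ k * (∏ j ∈ Finset.range k, (1 - a * q ^ ((j : ℤ) - 1))) / pochQ q k) * qc q⁻¹ k e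
      = ∑ d2 ∈ Finset.range (k+1), ∑ s ∈ Finset.range (e+1),
          (-1 : K) ^ (d2 + s) * a ^ d2 *
            q ^ ((((k-d2) + (e-s) + d2 * (d2 - 1) / 2 + s * (s + 1) / 2 : ℕ) : ℤ)
                - ((k-d2 : ℕ) : ℤ) * (s : ℤ) - (d2 : ℤ) * (s : ℤ)) /
            (pochQ q (k-d2) * pochQ q d2 * pochQ q (e-s) * pochQ q s) := by
  have hp := pochQ_ne_zero hq
  have hP1 : ∏ j ∈ Finset.range k, (1 - a * q ^ ((j : ℤ) - 1))
      = ∑ d2 ∈ Finset.range (k+1), qc q k d2 * (a * q⁻¹)^d2 := by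
    have h1 : ∏ j ∈ Finset.range k, (1 - a * q ^ ((j : ℤ) - 1))
        = ∏ j ∈ Finset.range k, (1 - (RingHom.id K) (q^j) * (a * q⁻¹)) := by
      apply Finset.prod_congr rfl
      intro j _
      rw [RingHom.id_apply]
      congr 1
      rw [zpow_sub₀ hq0, zpow_natCast, zpow_one]
      ring
    rw [h1, prod_eq_sum_qc (RingHom.id K) q (a*q⁻¹) k]
    simp only [RingHom.id_apply]
  have hP2 : qc q⁻¹ k e
      = q^e * (∑ s ∈ Finset.range (e+1), qc q e s * (q^(-(k:ℤ)))^s) / pochQ q e := by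
    rw [qc_inv_eq q hq0 hq k e]
    have h1 : ∏ j ∈ Finset.range e, (1 - q ^ ((j:ℤ) - k))
        = ∏ j ∈ Finset.range e, (1 - (RingHom.id K) (q^j) * q^(-(k:ℤ))) := by
      apply Finset.prod_congr rfl
      intro j _
      rw [RingHom.id_apply]
      congr 1
      rw [← zpow_natCast q j, ← zpow_add₀ hq0]
      congr 1 <;> ring
    rw [h1, prod_eq_sum_qc (RingHom.id K) q (q^(-(k:ℤ))) e]
    simp only [RingHom.id_apply]
  rw [hP1, hP2]
  rw [Finset.mul_sum, Finset.sum_div, Finset.sum_mul]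
  apply Finset.sum_congr rfl
  intro d2 hd2
  rw [Finset.mem_range] at hd2
  have hd2k : d2 ≤ k := by omega
  rw [Finset.mul_sum, Finset.sum_div, Finset.mul_sum]
  apply Finset.sum_congr rfl
  intro s hs
  rw [Finset.mem_range] at hs
  have hse : s ≤ e := by omega
  -- the crux scalar identity
  have hEz : (((k-d2) + (e-s) + d2 * (d2 - 1) / 2 + s * (s + 1) / 2 : ℕ) : ℤ)
        - ((k-d2 : ℕ) : ℤ) * (s : ℤ) - (d2 : ℤ) * (s : ℤ)
      = (k:ℤ) + (e:ℤ) + ((d2 * (d2 - 1) / 2 : ℕ) : ℤ) + ((s * (s - 1) / 2 : ℕ) : ℤ)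
        - (d2:ℤ) + (-(k:ℤ)) * (s:ℤ) := by
    have h1 : s * (s + 1) / 2 = s * (s - 1) / 2 + s := by
      rw [Nat.mul_comm s (s+1)]
      exact tri s
    rw [h1]
    push_cast [Nat.cast_sub hd2k, Nat.cast_sub hse]
    ring
  rw [hEz]
  rw [qc_closed q hp k d2 hd2k, qc_closed q hp e s hse]
  have hq1 : q^((k:ℤ)) * q^((e:ℤ)) * q^(((d2 * (d2 - 1) / 2 : ℕ) : ℤ))
        * q^(((s * (s - 1) / 2 : ℕ) : ℤ)) * q^(-(d2:ℤ)) * q^((-(k:ℤ)) * (s:ℤ))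
      = q^((k:ℤ) + (e:ℤ) + ((d2 * (d2 - 1) / 2 : ℕ) : ℤ) + ((s * (s - 1) / 2 : ℕ) : ℤ)
        - (d2:ℤ) + (-(k:ℤ)) * (s:ℤ)) := by
    rw [← zpow_add₀ hq0, ← zpow_add₀ hq0, ← zpow_add₀ hq0, ← zpow_add₀ hq0, ← zpow_add₀ hq0]
    congr 1 <;> ring
  rw [← hq1]
  rw [mul_pow a q⁻¹ d2, inv_pow, ← zpow_natCast q (d2 * (d2 - 1) / 2),
    ← zpow_natCast q (s * (s - 1) / 2), ← zpow_natCast q d2, ← zpow_neg,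
    ← zpow_natCast (q ^ (-(k:ℤ))) s, ← zpow_mul, ← zpow_natCast q k, ← zpow_natCast q e]
  have hz : ∀ m : ℤ, q ^ m ≠ 0 := fun m => zpow_ne_zero m hq0
  have h2k := hp k
  have h2e := hp e
  have h2d2 := hp d2
  have h2kd2 := hp (k-d2)
  have h2s := hp s
  have h2es := hp (e-s)
  field_simp
  ring

end TrefoilAux

open TrefoilAux

/-- Quiver form of the `F_K` invariant of the left-handed trefoil complement, stated
coefficientwise in `K⟦X⟧`.  The left-hand side is
`∑_{k≥0} qᵏ Xᵏ (∏_{j<k}(1 − X q^{−j})) (∏_{j<k}(1 − a q^{j−1})) / (q;q)_k`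
(whose `k`-th term has `X`-order `≥ k`, so only `k ≤ n` contribute to the coefficient of
`Xⁿ`), and the right-hand side is the quiver generating series
`∑_{d∈ℕ⁴} (−1)^{d₂+d₄} a^{d₂} q^{d₁+d₃+d₂(d₂−1)/2+d₄(d₄+1)/2−d₁d₄−d₂d₄}
X^{d₁+d₂+d₃+d₄} / ∏(q;q)_{d_i}`. -/
theorem trefoil_FK_quiver_form {K : Type*} [Field K] (q a : K) (hq0 : q ≠ 0)
    (hq : ∀ m : ℕ, 1 ≤ m → q ^ m ≠ 1) (n : ℕ) :
    (PowerSeries.coeff n)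
        (∑ k ∈ Finset.range (n + 1),
          PowerSeries.C
              (q ^ k * (∏ j ∈ Finset.range k, (1 - a * q ^ ((j : ℤ) - 1))) / pochQ q k) *
            PowerSeries.X ^ k *
            ∏ j ∈ Finset.range k, (1 - PowerSeries.C (q⁻¹ ^ j) * PowerSeries.X)) =
      ∑ d1 ∈ Finset.range (n + 1), ∑ d2 ∈ Finset.range (n + 1),
        ∑ d3 ∈ Finset.range (n + 1), ∑ d4 ∈ Finset.range (n + 1),
          if d1 + d2 + d3 + d4 = n then
            (-1 : K) ^ (d2 + d4) * a ^ d2 *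
              q ^ (((d1 + d3 + d2 * (d2 - 1) / 2 + d4 * (d4 + 1) / 2 : ℕ) : ℤ)
                  - (d1 : ℤ) * (d4 : ℤ) - (d2 : ℤ) * (d4 : ℤ)) /
              (pochQ q d1 * pochQ q d2 * pochQ q d3 * pochQ q d4)
          else 0 := by
  rw [map_sum]
  have hcoeff : ∀ k ∈ Finset.range (n+1),
      (PowerSeries.coeff n)
          (PowerSeries.C
              (q ^ k * (∏ j ∈ Finset.range k, (1 - a * q ^ ((j : ℤ) - 1))) / pochQ q k) *
            PowerSeries.X ^ k *
            ∏ j ∈ Finset.range k, (1 - PowerSeries.C (q⁻¹ ^ j) * PowerSeries.X))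
        = (q ^ k * (∏ j ∈ Finset.range k, (1 - a * q ^ ((j : ℤ) - 1))) / pochQ q k) *
            qc q⁻¹ k (n-k) := by
    intro k hk
    rw [Finset.mem_range] at hk
    generalize (q ^ k * (∏ j ∈ Finset.range k, (1 - a * q ^ ((j : ℤ) - 1))) / pochQ q k) = A
    rw [prod_eq_sum_qc (PowerSeries.C) q⁻¹ PowerSeries.X k, Finset.mul_sum, map_sum]
    have hterm : ∀ i, PowerSeries.C A * PowerSeries.X ^ k *
        (PowerSeries.C (qc q⁻¹ k i) * PowerSeries.X ^ i)
        = PowerSeries.C (A * qc q⁻¹ k i) * PowerSeries.X ^ (k+i) := by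
      intro i
      rw [map_mul, pow_add]
      ring
    simp only [hterm, PowerSeries.coeff_C_mul, PowerSeries.coeff_X_pow]
    rcases le_or_gt (n-k) k with h | h
    · rw [Finset.sum_eq_single (n-k)]
      · rw [if_pos (by omega), mul_one]
      · intro i hi hne
        rw [if_neg (by rw [Finset.mem_range] at hi; omega), mul_zero]
      · intro habs
        exact absurd (Finset.mem_range.2 (by omega)) habs
    · rw [qc_zero_of_gt q⁻¹ k (n-k) h, mul_zero]
      apply Finset.sum_eq_zero
      intro i hi
      rw [if_neg (by rw [Finset.mem_range] at hi; omega), mul_zero]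
  rw [Finset.sum_congr rfl hcoeff]
  refine Eq.trans ?_ (reindex n (fun d1 d2 d3 d4 =>
    (-1 : K) ^ (d2 + d4) * a ^ d2 *
      q ^ (((d1 + d3 + d2 * (d2 - 1) / 2 + d4 * (d4 + 1) / 2 : ℕ) : ℤ)
          - (d1 : ℤ) * (d4 : ℤ) - (d2 : ℤ) * (d4 : ℤ)) /
      (pochQ q d1 * pochQ q d2 * pochQ q d3 * pochQ q d4))).symm
  apply Finset.sum_congr rfl
  intro k _
  exact perk q a hq0 hq k (n-k)
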